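/- Let P : ℝⁿ → Matrix (Fin n) (Fin n) ℝ be a continuously differentiable map with P(u) invertible for each u. Let u, δu, ξ : ℝ → ℝⁿ satisfy u' = f(t,u), δu' = Df(t,u) δu, and the fiberwise-preconditioned adjoint equation ξ' = -P(u)⁻ᵀ (Df(t,u))ᵀ P(u)ᵀ ξ - P(u)⁻ᵀ (DP(u)[f(t,u)])ᵀ ξ, where DP(u)[v] denotes the directional derivative of P at u in direction v. Then t ↦ ξ(t)ᵀ P(u(t)) δu(t) is constant. -/

import Mathlib

open Matrix

lemma mulVec_dot_swap {n : ℕ} (B : Matrix (Fin n) (Fin n) ℝ) (x y : Fin n → ℝ) :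
    B.mulVec x ⬝ᵥ y = x ⬝ᵥ Bᵀ.mulVec y := by
  rw [dotProduct_mulVec, vecMul_transpose, dotProduct_comm]

/-- Conservation law for the fiberwise-preconditioned adjoint equation with a
state-dependent duality pairing `⟨p,v⟩_{P(u)} = pᵀ P(u) v`: if `u' = f(t,u)`,
`δu' = Df(t,u) δu`, and `ξ' = -P(u)⁻ᵀ (Df)ᵀ P(u)ᵀ ξ - P(u)⁻ᵀ (DP(u)[f(t,u)])ᵀ ξ`,
then `ξᵀ P(u) δu` is constant. -/
theorem fiberwise_preconditioned_adjoint_conservation {n : ℕ}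
    (P : (Fin n → ℝ) → Matrix (Fin n) (Fin n) ℝ)
    (DP : (Fin n → ℝ) → (Fin n → ℝ) → Matrix (Fin n) (Fin n) ℝ)
    (hPinv : ∀ v, IsUnit (P v).det)
    (hPdiff : ∀ i j, ContDiff ℝ 1 (fun w => P w i j))
    (hDP : ∀ v w i j, fderiv ℝ (fun z => P z i j) v w = DP v w i j)
    (f : ℝ → (Fin n → ℝ) → (Fin n → ℝ))
    (J : ℝ → Matrix (Fin n) (Fin n) ℝ)
    (u δu ξ : ℝ → Fin n → ℝ)
    (hf : ∀ t, ContDiff ℝ 1 (f t))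
    (hJ : ∀ t, HasFDerivAt (f t) (Matrix.mulVecLin (J t)).toContinuousLinearMap (u t))
    (hu : ∀ t, HasDerivAt u (f t (u t)) t)
    (hδu : ∀ t, HasDerivAt δu ((J t).mulVec (δu t)) t)
    (hξ : ∀ t, HasDerivAt ξ
      (-((((P (u t))⁻¹)ᵀ * (J t)ᵀ * (P (u t))ᵀ).mulVec (ξ t))
        - ((((P (u t))⁻¹)ᵀ * (DP (u t) (f t (u t)))ᵀ).mulVec (ξ t))) t) :
    ∀ s t : ℝ, ξ s ⬝ᵥ ((P (u s)).mulVec (δu s)) = ξ t ⬝ᵥ ((P (u t)).mulVec (δu t)) := by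
  have hg : ∀ t : ℝ, HasDerivAt (fun t => ξ t ⬝ᵥ ((P (u t)).mulVec (δu t))) 0 t := by
    intro t
    set A := P (u t) with hA
    set M := DP (u t) (f t (u t)) with hM
    set Ξ : Fin n → ℝ :=
      -(((A⁻¹)ᵀ * (J t)ᵀ * Aᵀ).mulVec (ξ t)) - (((A⁻¹)ᵀ * Mᵀ).mulVec (ξ t)) with hΞ
    set Δ : Fin n → ℝ := (J t).mulVec (δu t) with hΔ
    have hξi : ∀ i, HasDerivAt (fun s => ξ s i) (Ξ i) t := fun i =>
      hasDerivAt_pi.mp (hξ t) i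
    have hδui : ∀ i, HasDerivAt (fun s => δu s i) (Δ i) t := fun i =>
      hasDerivAt_pi.mp (hδu t) i
    have hPij : ∀ i j, HasDerivAt (fun s => P (u s) i j) (M i j) t := by
      intro i j
      have hd : HasFDerivAt (fun w => P w i j)
          (fderiv ℝ (fun w => P w i j) (u t)) (u t) :=
        (((hPdiff i j).differentiable one_ne_zero) (u t)).hasFDerivAt
      have := hd.comp_hasDerivAt t (hu t)
      rwa [hDP (u t) (f t (u t)) i j] at this
    -- derivative of the expanded sum
    have hsum : HasDerivAt
        (fun s => ∑ i, ∑ j, ξ s i * (P (u s) i j * δu s j))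
        (∑ i, ∑ j, (Ξ i * (A i j * δu t j) +
          ξ t i * (M i j * δu t j + A i j * Δ j))) t := by
      apply HasDerivAt.fun_sum
      intro i _
      apply HasDerivAt.fun_sum
      intro j _
      exact (hξi i).mul ((hPij i j).mul (hδui j))
    have hfun : (fun s => ξ s ⬝ᵥ ((P (u s)).mulVec (δu s))) =
        (fun s => ∑ i, ∑ j, ξ s i * (P (u s) i j * δu s j)) := by
      funext s
      simp [dotProduct, mulVec, Finset.mul_sum]
    rw [hfun]
    convert hsum using 1
    -- show the derivative expression equals 0
    have hexp : (∑ i, ∑ j, (Ξ i * (A i j * δu t j) +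
          ξ t i * (M i j * δu t j + A i j * Δ j)))
        = Ξ ⬝ᵥ A.mulVec (δu t) + ξ t ⬝ᵥ M.mulVec (δu t) + ξ t ⬝ᵥ A.mulVec Δ := by
      simp only [dotProduct, mulVec, Finset.mul_sum, mul_add, Finset.sum_add_distrib]
      ring
    rw [hexp]
    have hinv : A⁻¹ * A = 1 := nonsing_inv_mul A (hPinv (u t))
    have h1 : ((A⁻¹)ᵀ * (J t)ᵀ * Aᵀ).mulVec (ξ t) ⬝ᵥ A.mulVec (δu t)
        = ξ t ⬝ᵥ A.mulVec Δ := by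
      rw [mulVec_dot_swap, hΔ]
      congr 1
      rw [mulVec_mulVec]
      rw [transpose_mul, transpose_mul, transpose_transpose, transpose_transpose,
        transpose_transpose]
      rw [Matrix.mul_assoc, Matrix.mul_assoc, hinv, Matrix.mul_one]
      rw [← mulVec_mulVec]
    have h2 : ((A⁻¹)ᵀ * Mᵀ).mulVec (ξ t) ⬝ᵥ A.mulVec (δu t)
        = ξ t ⬝ᵥ M.mulVec (δu t) := by
      rw [mulVec_dot_swap]
      congr 1
      rw [mulVec_mulVec, transpose_mul, transpose_transpose, transpose_transpose,
        Matrix.mul_assoc, hinv, Matrix.mul_one]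
    rw [hΞ]
    rw [sub_dotProduct, neg_dotProduct, h1, h2]
    ring
  intro s t
  have hdiff : Differentiable ℝ (fun t => ξ t ⬝ᵥ ((P (u t)).mulVec (δu t))) :=
    fun t => (hg t).differentiableAt
  have hderiv : ∀ t, deriv (fun t => ξ t ⬝ᵥ ((P (u t)).mulVec (δu t))) t = 0 :=
    fun t => (hg t).deriv
  exact is_const_of_deriv_eq_zero hdiff hderiv s t
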